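/- With the same setup: if (Φ, (w^q)_{q∈E}) is a Nash equilibrium of the ensemble game, then the ensemble w^av = (1/|E|) Σ_q w^q satisfies R^e(w^av ∘ Φ) ≤ R^e(w' ∘ Φ) for all w' ∈ H_w and all e ∈ E. (Proof hint: given any deviation target w', the environment e can play w̃^e = |E|·w' − Σ_{q≠e} w^q ∈ H_w, whose induced ensemble equals w'.) -/

import Mathlib

lemma hw_sum_mem {Z E : Type*} [Fintype E] {k : ℕ}
    (Hw : Set (Z → (Fin k → ℝ)))
    (hadd : ∀ w1 ∈ Hw, ∀ w2 ∈ Hw, w1 + w2 ∈ Hw)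
    (hzero : (0 : Z → (Fin k → ℝ)) ∈ Hw)
    (w : E → (Z → (Fin k → ℝ))) (hw : ∀ e, w e ∈ Hw)
    (s : Finset E) : (∑ q ∈ s, w q) ∈ Hw := by
  classical
  induction s using Finset.induction_on with
  | empty => simpa using hzero
  | insert _ _ h ih =>
      rw [Finset.sum_insert h]
      exact hadd _ (hw _) _ ih

/-- If (Φ, (w^q)) is a Nash equilibrium of the ensemble game, the ensemble
w^av = (1/|E|) ∑ w^q is an invariant predictor. -/
theorem ne_ensemble_is_invariant
    {X Z E : Type*} [Fintype E] [Nonempty E] [DecidableEq E] {k : ℕ}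
    (Hw : Set (Z → (Fin k → ℝ)))
    (hadd : ∀ w1 ∈ Hw, ∀ w2 ∈ Hw, w1 + w2 ∈ Hw)
    (hsmul : ∀ (c : ℝ), ∀ w ∈ Hw, c • w ∈ Hw)
    (R : E → (X → (Fin k → ℝ)) → ℝ)
    (Φ : X → Z)
    (w : E → (Z → (Fin k → ℝ)))
    (hw : ∀ e, w e ∈ Hw)
    (hne : ∀ e : E, ∀ wb ∈ Hw,
      R e (fun x => ((Fintype.card E : ℝ)⁻¹) •
        (w e (Φ x) + ∑ q ∈ Finset.univ.erase e, w q (Φ x)))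
      ≤ R e (fun x => ((Fintype.card E : ℝ)⁻¹) •
        (wb (Φ x) + ∑ q ∈ Finset.univ.erase e, w q (Φ x)))) :
    ∀ e : E, ∀ w' ∈ Hw,
      R e (fun x => ((Fintype.card E : ℝ)⁻¹) • (∑ q : E, w q (Φ x)))
      ≤ R e (fun x => w' (Φ x)) := by
  intro e w' hw'
  have hzero : (0 : Z → (Fin k → ℝ)) ∈ Hw := by
    simpa using hsmul 0 (w e) (hw e)
  have hsumrest : (∑ q ∈ Finset.univ.erase e, w q) ∈ Hw :=
    hw_sum_mem Hw hadd hzero w hw _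
  set wb : Z → (Fin k → ℝ) :=
    (Fintype.card E : ℝ) • w' + (-1 : ℝ) • (∑ q ∈ Finset.univ.erase e, w q) with hwb
  have hwbmem : wb ∈ Hw :=
    hadd _ (hsmul _ _ hw') _ (hsmul _ _ hsumrest)
  have hc : (Fintype.card E : ℝ) ≠ 0 := by
    exact_mod_cast Fintype.card_ne_zero
  have h := hne e wb hwbmem
  have h1 : (fun x => ((Fintype.card E : ℝ)⁻¹) •
      (w e (Φ x) + ∑ q ∈ Finset.univ.erase e, w q (Φ x)))
      = (fun x => ((Fintype.card E : ℝ)⁻¹) • (∑ q : E, w q (Φ x))) := by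
    funext x
    congr 1
    exact Finset.add_sum_erase _ (fun q => w q (Φ x)) (Finset.mem_univ e)
  have h2 : (fun x => ((Fintype.card E : ℝ)⁻¹) •
      (wb (Φ x) + ∑ q ∈ Finset.univ.erase e, w q (Φ x)))
      = (fun x => w' (Φ x)) := by
    funext x
    have : wb (Φ x) = (Fintype.card E : ℝ) • w' (Φ x)
        - ∑ q ∈ Finset.univ.erase e, w q (Φ x) := by
      simp [hwb, sub_eq_add_neg, Finset.sum_apply]
      abel
    rw [this, sub_add_cancel, smul_smul, inv_mul_cancel₀ hc, one_smul]
  rw [h1, h2] at h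
  exact h
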